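/- Half-integrality inverse lemma: Let A be an m × n integer matrix such that every column j satisfies Σ_{i=1}^m |A_{ij}| ≤ 2. Then for every square non-singular submatrix S of A, the inverse S⁻¹ is half-integral (every entry of S⁻¹ lies in (1/2)ℤ). -/
import Mathlib

open Matrix Finset

private def IsInt (q : ℚ) : Prop := ∃ z : ℤ, q = (z : ℚ)
private def IsHalf (q : ℚ) : Prop := ∃ z : ℤ, q = (z : ℚ) / 2

private lemma IsInt.isHalf {q : ℚ} (h : IsInt q) : IsHalf q := by
  obtain ⟨z, rfl⟩ := h; exact ⟨2 * z, by push_cast; ring⟩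

private lemma isInt_sum {ι : Type*} (s : Finset ι) (f : ι → ℚ)
    (h : ∀ i ∈ s, IsInt (f i)) : IsInt (∑ i ∈ s, f i) := by
  refine Finset.sum_induction f IsInt ?_ ⟨0, by simp⟩ h
  rintro a b ⟨za, rfl⟩ ⟨zb, rfl⟩
  exact ⟨za + zb, by push_cast; ring⟩

/-- The statement we prove by induction on `k`. -/
private def KeyStmt (k : ℕ) : Prop :=
  ∀ (A : Matrix (Fin k) (Fin k) ℤ) (b : Fin k → ℤ) (x : Fin k → ℚ),
    (∀ j, ∑ i, |A i j| ≤ 2) →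
    (∀ i, ∑ j, (A i j : ℚ) * x j = (b i : ℚ)) →
    (A.map (fun t : ℤ => (t : ℚ))).det ≠ 0 →
    (∀ j, IsHalf (x j)) ∧ (∀ j, (∑ i, |A i j|) ≤ 1 → IsInt (x j))

private lemma det_single_row {k : ℕ} (B : Matrix (Fin (k+1)) (Fin (k+1)) ℚ)
    (i0 j0 : Fin (k+1)) (h : ∀ j, j ≠ j0 → B i0 j = 0) :
    B.det = (-1) ^ (i0 + j0 : ℕ) * B i0 j0 *
      (B.submatrix i0.succAbove j0.succAbove).det := by
  rw [det_succ_row B i0, Finset.sum_eq_single j0]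
  · intro j _ hj; rw [h j hj]; ring
  · intro hj; exact absurd (Finset.mem_univ j0) hj

private lemma det_single_col {k : ℕ} (B : Matrix (Fin (k+1)) (Fin (k+1)) ℚ)
    (i0 j0 : Fin (k+1)) (h : ∀ i, i ≠ i0 → B i j0 = 0) :
    B.det = (-1) ^ (i0 + j0 : ℕ) * B i0 j0 *
      (B.submatrix i0.succAbove j0.succAbove).det := by
  rw [det_succ_column B j0, Finset.sum_eq_single i0]
  · intro i _ hi; rw [h i hi]; ring
  · intro hi; exact absurd (Finset.mem_univ i0) hi

/-- Reduction when row `i0` has a single nonzero entry, which is `±1`,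
located at column `j0`. -/
private lemma rowReduce {k : ℕ} (IH : KeyStmt k)
    (A : Matrix (Fin (k+1)) (Fin (k+1)) ℤ) (b : Fin (k+1) → ℤ) (x : Fin (k+1) → ℚ)
    (hcol : ∀ j, ∑ i, |A i j| ≤ 2)
    (hx : ∀ i, ∑ j, (A i j : ℚ) * x j = (b i : ℚ))
    (hdet : (A.map (fun t : ℤ => (t : ℚ))).det ≠ 0)
    (i0 j0 : Fin (k+1)) (ha : A i0 j0 = 1 ∨ A i0 j0 = -1)
    (hrow : ∀ j, j ≠ j0 → A i0 j = 0) :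
    (∀ j, IsHalf (x j)) ∧ (∀ j, (∑ i, |A i j|) ≤ 1 → IsInt (x j)) := by
  set A' : Matrix (Fin k) (Fin k) ℤ := A.submatrix i0.succAbove j0.succAbove with hA'
  -- value of x j0
  have hx0 : (A i0 j0 : ℚ) * x j0 = (b i0 : ℚ) := by
    have := hx i0
    rw [Fin.sum_univ_succAbove (fun j => (A i0 j : ℚ) * x j) j0] at this
    have hz : ∑ j' : Fin k, (A i0 (j0.succAbove j') : ℚ) * x (j0.succAbove j') = 0 := by
      refine Finset.sum_eq_zero fun j' _ => ?_
      rw [hrow _ (Fin.succAbove_ne j0 j')]; simp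
    rw [hz, add_zero] at this
    exact this
  set z0 : ℤ := A i0 j0 * b i0 with hz0
  have hxj0 : x j0 = (z0 : ℚ) := by
    rw [hz0]
    rcases ha with h | h <;> rw [h] <;> rw [h] at hx0 <;> push_cast at hx0 ⊢ <;> linarith
  -- reduced data
  set b' : Fin k → ℤ := fun i' => b (i0.succAbove i') - A (i0.succAbove i') j0 * z0 with hb'
  set x' : Fin k → ℚ := fun j' => x (j0.succAbove j') with hx'def
  have hcolsplit : ∀ j : Fin (k+1),
      (∑ i, |A i j|) = |A i0 j| + ∑ i' : Fin k, |A (i0.succAbove i') j| :=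
    fun j => Fin.sum_univ_succAbove (fun i => |A i j|) i0
  have hcol' : ∀ j', ∑ i', |A' i' j'| ≤ 2 := by
    intro j'
    have h1 := hcolsplit (j0.succAbove j')
    have h2 := hcol (j0.succAbove j')
    have h3 : (0:ℤ) ≤ |A i0 (j0.succAbove j')| := abs_nonneg _
    simp only [hA', Matrix.submatrix_apply]
    omega
  have hxred : ∀ i', ∑ j', (A' i' j' : ℚ) * x' j' = (b' i' : ℚ) := by
    intro i'
    have := hx (i0.succAbove i')
    rw [Fin.sum_univ_succAbove (fun j => (A (i0.succAbove i') j : ℚ) * x j) j0] at this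
    rw [hxj0] at this
    simp only [hA', Matrix.submatrix_apply, hx'def, hb']
    push_cast
    linarith
  have hdet' : (A'.map (fun t : ℤ => (t : ℚ))).det ≠ 0 := by
    intro h0
    apply hdet
    rw [det_single_row (A.map (fun t : ℤ => (t : ℚ))) i0 j0
      (fun j hj => by simp [Matrix.map_apply, hrow j hj]), Matrix.submatrix_map]
    have h0' : ((A.submatrix i0.succAbove j0.succAbove).map
        (fun t : ℤ => (t : ℚ))).det = 0 := h0
    rw [h0']; ring
  obtain ⟨H1, H2⟩ := IH A' b' x' hcol' hxred hdet'
  constructor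
  · intro j
    by_cases hj : j = j0
    · subst hj; exact IsInt.isHalf ⟨z0, hxj0⟩
    · obtain ⟨j', rfl⟩ := Fin.exists_succAbove_eq (Ne.symm hj : j0 ≠ j).symm
      exact H1 j'
  · intro j hle
    by_cases hj : j = j0
    · subst hj; exact ⟨z0, hxj0⟩
    · obtain ⟨j', rfl⟩ := Fin.exists_succAbove_eq (Ne.symm hj : j0 ≠ j).symm
      refine H2 j' ?_
      have h1 := hcolsplit (j0.succAbove j')
      have h3 : (0:ℤ) ≤ |A i0 (j0.succAbove j')| := abs_nonneg _
      simp only [hA', Matrix.submatrix_apply]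
      omega

/-- Reduction when column `j0` has a single nonzero entry, located at row `i0`. -/
private lemma colReduce {k : ℕ} (IH : KeyStmt k)
    (A : Matrix (Fin (k+1)) (Fin (k+1)) ℤ) (b : Fin (k+1) → ℤ) (x : Fin (k+1) → ℚ)
    (hcol : ∀ j, ∑ i, |A i j| ≤ 2)
    (hx : ∀ i, ∑ j, (A i j : ℚ) * x j = (b i : ℚ))
    (hdet : (A.map (fun t : ℤ => (t : ℚ))).det ≠ 0)
    (i0 j0 : Fin (k+1)) (ha : A i0 j0 ≠ 0)
    (hcs : ∀ i, i ≠ i0 → A i j0 = 0) :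
    (∀ j, IsHalf (x j)) ∧ (∀ j, (∑ i, |A i j|) ≤ 1 → IsInt (x j)) := by
  set A' : Matrix (Fin k) (Fin k) ℤ := A.submatrix i0.succAbove j0.succAbove with hA'
  set b' : Fin k → ℤ := fun i' => b (i0.succAbove i') with hb'
  set x' : Fin k → ℚ := fun j' => x (j0.succAbove j') with hx'def
  have hcolsplit : ∀ j : Fin (k+1),
      (∑ i, |A i j|) = |A i0 j| + ∑ i' : Fin k, |A (i0.succAbove i') j| :=
    fun j => Fin.sum_univ_succAbove (fun i => |A i j|) i0
  have hcol' : ∀ j', ∑ i', |A' i' j'| ≤ 2 := by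
    intro j'
    have h1 := hcolsplit (j0.succAbove j')
    have h2 := hcol (j0.succAbove j')
    have h3 : (0:ℤ) ≤ |A i0 (j0.succAbove j')| := abs_nonneg _
    simp only [hA', Matrix.submatrix_apply]
    omega
  have hxred : ∀ i', ∑ j', (A' i' j' : ℚ) * x' j' = (b' i' : ℚ) := by
    intro i'
    have := hx (i0.succAbove i')
    rw [Fin.sum_univ_succAbove (fun j => (A (i0.succAbove i') j : ℚ) * x j) j0] at this
    rw [hcs _ (Fin.succAbove_ne i0 i')] at this
    simp only [Int.cast_zero, zero_mul, zero_add] at this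
    simpa only [hA', Matrix.submatrix_apply, hx'def, hb'] using this
  have hdet' : (A'.map (fun t : ℤ => (t : ℚ))).det ≠ 0 := by
    intro h0
    apply hdet
    rw [det_single_col (A.map (fun t : ℤ => (t : ℚ))) i0 j0
      (fun i hi => by simp [Matrix.map_apply, hcs i hi]), Matrix.submatrix_map]
    have h0' : ((A.submatrix i0.succAbove j0.succAbove).map
        (fun t : ℤ => (t : ℚ))).det = 0 := h0
    rw [h0']; ring
  obtain ⟨H1, H2⟩ := IH A' b' x' hcol' hxred hdet'
  -- the sum in row i0 over the other columns is an integer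
  have hSS : IsInt (∑ j' : Fin k, (A i0 (j0.succAbove j') : ℚ) * x' j') := by
    refine isInt_sum _ _ fun j' _ => ?_
    by_cases h0 : A i0 (j0.succAbove j') = 0
    · exact ⟨0, by rw [h0]; simp⟩
    · have hone : 1 ≤ |A i0 (j0.succAbove j')| := Int.one_le_abs (by omega)
      have h1 := hcolsplit (j0.succAbove j')
      have h2 := hcol (j0.succAbove j')
      have hle1 : (∑ i', |A' i' j'|) ≤ 1 := by
        simp only [hA', Matrix.submatrix_apply]; omega
      obtain ⟨z, hz⟩ := H2 j' hle1
      exact ⟨A i0 (j0.succAbove j') * z, by rw [hz]; push_cast; ring⟩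
  obtain ⟨N, hN⟩ := hSS
  -- equation in row i0
  have hx0 : (A i0 j0 : ℚ) * x j0 + (N : ℚ) = (b i0 : ℚ) := by
    have := hx i0
    rw [Fin.sum_univ_succAbove (fun j => (A i0 j : ℚ) * x j) j0] at this
    rw [← this, hN]
  have habs : |A i0 j0| ≤ 2 := by
    have h1 := hcolsplit j0
    have h2 := hcol j0
    have h3 : (0:ℤ) ≤ ∑ i' : Fin k, |A (i0.succAbove i') j0| :=
      Finset.sum_nonneg fun _ _ => abs_nonneg _
    omega
  have hcases : A i0 j0 = -2 ∨ A i0 j0 = -1 ∨ A i0 j0 = 1 ∨ A i0 j0 = 2 := by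
    rw [abs_le] at habs; omega
  have hhalf0 : IsHalf (x j0) := by
    rcases hcases with h | h | h | h <;> rw [h] at hx0
    · exact ⟨N - b i0, by push_cast at hx0 ⊢; linarith⟩
    · exact IsInt.isHalf ⟨N - b i0, by push_cast at hx0 ⊢; linarith⟩
    · exact IsInt.isHalf ⟨b i0 - N, by push_cast at hx0 ⊢; linarith⟩
    · exact ⟨b i0 - N, by push_cast at hx0 ⊢; linarith⟩
  have hint0 : (∑ i, |A i j0|) ≤ 1 → IsInt (x j0) := by
    intro hle
    have h1 := hcolsplit j0
    have h3 : (0:ℤ) ≤ ∑ i' : Fin k, |A (i0.succAbove i') j0| :=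
      Finset.sum_nonneg fun _ _ => abs_nonneg _
    have : |A i0 j0| ≤ 1 := by omega
    rw [abs_le] at this
    rcases hcases with h | h | h | h <;> rw [h] at hx0 <;> try omega
    · exact ⟨N - b i0, by push_cast at hx0 ⊢; linarith⟩
    · exact ⟨b i0 - N, by push_cast at hx0 ⊢; linarith⟩
  constructor
  · intro j
    by_cases hj : j = j0
    · subst hj; exact hhalf0
    · obtain ⟨j', rfl⟩ := Fin.exists_succAbove_eq (Ne.symm hj : j0 ≠ j).symm
      exact H1 j'
  · intro j hle
    by_cases hj : j = j0
    · subst hj; exact hint0 hle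
    · obtain ⟨j', rfl⟩ := Fin.exists_succAbove_eq (Ne.symm hj : j0 ≠ j).symm
      refine H2 j' ?_
      have h1 := hcolsplit (j0.succAbove j')
      have h3 : (0:ℤ) ≤ |A i0 (j0.succAbove j')| := abs_nonneg _
      simp only [hA', Matrix.submatrix_apply]
      omega

private lemma key : ∀ k : ℕ, KeyStmt k := by
  intro k
  induction k with
  | zero =>
      intro A b x _ _ _
      exact ⟨fun j => j.elim0, fun j => j.elim0⟩
  | succ k IH =>
      intro A b x hcol hx hdet
      -- Case 1: some column has exactly one nonzero entry
      by_cases hc1 : ∃ i0 j0, A i0 j0 ≠ 0 ∧ ∀ i, i ≠ i0 → A i j0 = 0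
      · obtain ⟨i0, j0, ha, hcs⟩ := hc1
        exact colReduce IH A b x hcol hx hdet i0 j0 ha hcs
      -- no zero column (else det = 0)
      have hnz : ∀ j, ∃ i, A i j ≠ 0 := by
        intro j
        by_contra h
        push_neg at h
        exact hdet (Matrix.det_eq_zero_of_column_eq_zero j
          (fun i => by simp [Matrix.map_apply, h i]))
      -- every column has at least two nonzero entries
      have htwo : ∀ j, ∃ i1 i2, i1 ≠ i2 ∧ A i1 j ≠ 0 ∧ A i2 j ≠ 0 := by
        intro j
        obtain ⟨i1, hi1⟩ := hnz j
        push_neg at hc1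
        obtain ⟨i2, hi2ne, hi2⟩ := hc1 i1 j hi1
        exact ⟨i1, i2, Ne.symm hi2ne, hi1, hi2⟩
      -- hence every column has abs sum exactly 2
      have hcol2 : ∀ j, (∑ i, |A i j|) = 2 := by
        intro j
        obtain ⟨i1, i2, hne, h1, h2⟩ := htwo j
        have hpair : |A i1 j| + |A i2 j| ≤ ∑ i, |A i j| := by
          have h := Finset.sum_le_sum_of_subset_of_nonneg
            (Finset.subset_univ ({i1, i2} : Finset (Fin (k+1))))
            (fun i _ _ => abs_nonneg (A i j))
          rwa [Finset.sum_pair hne] at h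
        have g1 : 1 ≤ |A i1 j| := Int.one_le_abs h1
        have g2 : 1 ≤ |A i2 j| := Int.one_le_abs h2
        have := hcol j
        omega
      -- Case 2: some row has at most one nonzero entry
      by_cases hr1 : ∃ i0, ∀ j1 j2, A i0 j1 ≠ 0 → A i0 j2 ≠ 0 → j1 = j2
      · obtain ⟨i0, hi0⟩ := hr1
        by_cases hrz : ∀ j, A i0 j = 0
        · exact absurd (Matrix.det_eq_zero_of_row_eq_zero i0
            (fun j => by simp [Matrix.map_apply, hrz j])) hdet
        · push_neg at hrz
          obtain ⟨j0, hj0⟩ := hrz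
          have hrow : ∀ j, j ≠ j0 → A i0 j = 0 := by
            intro j hj
            by_contra h
            exact hj (hi0 j j0 h hj0)
          -- A i0 j0 = ±1 because column j0 has another nonzero entry
          have ha : A i0 j0 = 1 ∨ A i0 j0 = -1 := by
            obtain ⟨i1, i2, hne, h1, h2⟩ := htwo j0
            have hother : ∃ i, i ≠ i0 ∧ A i j0 ≠ 0 := by
              by_cases e1 : i1 = i0
              · exact ⟨i2, by rw [← e1]; exact hne.symm, h2⟩
              · exact ⟨i1, e1, h1⟩
            obtain ⟨i, hine, hi⟩ := hother
            have hpair : |A i0 j0| + |A i j0| ≤ ∑ i', |A i' j0| := by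
              have h := Finset.sum_le_sum_of_subset_of_nonneg
                (Finset.subset_univ ({i0, i} : Finset (Fin (k+1))))
                (fun i' _ _ => abs_nonneg (A i' j0))
              rwa [Finset.sum_pair (Ne.symm hine : i0 ≠ i)] at h
            have g1 : 1 ≤ |A i0 j0| := Int.one_le_abs hj0
            have g2 : 1 ≤ |A i j0| := Int.one_le_abs hi
            have := hcol j0
            have : |A i0 j0| = 1 := by omega
            rcases abs_eq (by norm_num : (0:ℤ) ≤ 1) |>.mp this with h | h
            · exact Or.inl h
            · exact Or.inr h
          exact rowReduce IH A b x hcol hx hdet i0 j0 ha hrow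
      -- Case 3: every row has at least two nonzero entries
      · push_neg at hr1
        have hrowtwo : ∀ i, ∃ j1 j2, j1 ≠ j2 ∧ A i j1 ≠ 0 ∧ A i j2 ≠ 0 := by
          intro i
          obtain ⟨j1, j2, h1, h2, hne⟩ := hr1 i
          exact ⟨j1, j2, hne, h1, h2⟩
        -- row sums
        set rs : Fin (k+1) → ℤ := fun i => ∑ j, |A i j| with hrs
        have hrge : ∀ i, 2 ≤ rs i := by
          intro i
          obtain ⟨j1, j2, hne, h1, h2⟩ := hrowtwo i
          have hpair : |A i j1| + |A i j2| ≤ rs i := by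
            rw [hrs]
            have h := Finset.sum_le_sum_of_subset_of_nonneg
              (Finset.subset_univ ({j1, j2} : Finset (Fin (k+1))))
              (fun j _ _ => abs_nonneg (A i j))
            rwa [Finset.sum_pair hne] at h
          have g1 : 1 ≤ |A i j1| := Int.one_le_abs h1
          have g2 : 1 ≤ |A i j2| := Int.one_le_abs h2
          omega
        have hconst : (∑ _i : Fin (k+1), (2:ℤ)) = 2 * (k+1) := by
          rw [Finset.sum_const, Finset.card_univ, Fintype.card_fin]
          push_cast; ring
        have hsumrs : ∑ i, rs i = 2 * (k+1) := by
          rw [hrs, Finset.sum_comm, Finset.sum_congr rfl (fun j _ => hcol2 j), hconst]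
        have hrs2 : ∀ i, rs i = 2 := by
          intro i
          by_contra h
          have hgt : 2 < rs i := lt_of_le_of_ne (hrge i) (Ne.symm h)
          have hlt : (∑ _i : Fin (k+1), (2:ℤ)) < ∑ i, rs i :=
            Finset.sum_lt_sum (fun i _ => hrge i) ⟨i, Finset.mem_univ i, hgt⟩
          rw [hsumrs, hconst] at hlt
          exact absurd hlt (lt_irrefl _)
        -- row 0: exactly two nonzero entries j1 j2, both ±1
        obtain ⟨j1, j2, hne12, h1, h2⟩ := hrowtwo 0
        have hpair : |A 0 j1| + |A 0 j2| ≤ rs 0 := by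
          rw [hrs]
          have h := Finset.sum_le_sum_of_subset_of_nonneg
            (Finset.subset_univ ({j1, j2} : Finset (Fin (k+1))))
            (fun j _ _ => abs_nonneg (A 0 j))
          rwa [Finset.sum_pair hne12] at h
        have g1 : 1 ≤ |A 0 j1| := Int.one_le_abs h1
        have g2 : 1 ≤ |A 0 j2| := Int.one_le_abs h2
        have habs1 : |A 0 j1| = 1 := by have := hrs2 0; omega
        have habs2 : |A 0 j2| = 1 := by have := hrs2 0; omega
        have hrest : ∀ j, j ≠ j1 → j ≠ j2 → A 0 j = 0 := by
          intro j hj1 hj2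
          have hsub : ({j1, j2} : Finset (Fin (k+1))) ⊆ Finset.univ :=
            Finset.subset_univ _
          have hsd : (∑ j' ∈ Finset.univ \ {j1, j2}, |A 0 j'|)
              + ∑ j' ∈ ({j1, j2} : Finset (Fin (k+1))), |A 0 j'| = rs 0 := by
            rw [hrs]; exact Finset.sum_sdiff hsub
          rw [Finset.sum_pair hne12] at hsd
          have hz : (∑ j' ∈ Finset.univ \ {j1, j2}, |A 0 j'|) = 0 := by
            have := hrs2 0; omega
          have hmem : j ∈ Finset.univ \ ({j1, j2} : Finset (Fin (k+1))) := by
            simp [hj1, hj2]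
          have := (Finset.sum_eq_zero_iff_of_nonneg
            (fun _ _ => abs_nonneg _)).mp hz j hmem
          exact abs_eq_zero.mp this
        -- the column operation
        set c : ℤ := A 0 j1 * A 0 j2 with hc
        have hA01 : A 0 j1 * A 0 j1 = 1 := by
          rcases (abs_eq (by norm_num : (0:ℤ) ≤ 1)).mp habs1 with h | h <;>
            rw [h] <;> ring
        set T : Matrix (Fin (k+1)) (Fin (k+1)) ℤ :=
          A.updateCol j2 (fun i => A i j2 - c * A i j1) with hT
        set y : Fin (k+1) → ℚ := Function.update x j1 (x j1 + (c:ℚ) * x j2) with hy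
        have hTapply : ∀ i j, T i j = if j = j2 then A i j2 - c * A i j1 else A i j := by
          intro i j
          rw [hT, Matrix.updateCol_apply]
        have hT0j2 : T 0 j2 = 0 := by
          have h := hTapply 0 j2
          rw [if_pos rfl] at h
          rw [h, hc]
          linear_combination (-(A 0 j2)) * hA01
        have hTrow : ∀ j, j ≠ j1 → T 0 j = 0 := by
          intro j hj
          by_cases hj2 : j = j2
          · subst hj2; exact hT0j2
          · rw [hTapply, if_neg hj2]; exact hrest j hj hj2
        have hT0j1 : T 0 j1 = A 0 j1 := by
          rw [hTapply, if_neg hne12]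
        have haT : T 0 j1 = 1 ∨ T 0 j1 = -1 := by
          rw [hT0j1]
          rcases (abs_eq (by norm_num : (0:ℤ) ≤ 1)).mp habs1 with h | h
          · exact Or.inl h
          · exact Or.inr h
        -- column sums of T
        have hcolT : ∀ j, ∑ i, |T i j| ≤ 2 := by
          intro j
          by_cases hj2 : j = j2
          · rw [hj2]
            rw [Fin.sum_univ_succAbove (fun i => |T i j2|) 0, hT0j2, abs_zero, zero_add]
            have hstep : ∀ i' : Fin k, |T ((0:Fin (k+1)).succAbove i') j2| ≤
                |A ((0:Fin (k+1)).succAbove i') j2| + |A ((0:Fin (k+1)).succAbove i') j1| := by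
              intro i'
              rw [hTapply, if_pos rfl]
              calc |A _ j2 - c * A _ j1| ≤ |A _ j2| + |c * A _ j1| := abs_sub _ _
                _ = |A _ j2| + |c| * |A _ j1| := by rw [abs_mul]
                _ = |A _ j2| + |A _ j1| := by
                    rw [hc, abs_mul, habs1, habs2]; ring_nf
            calc ∑ i' : Fin k, |T ((0:Fin (k+1)).succAbove i') j2|
                ≤ ∑ i' : Fin k, (|A ((0:Fin (k+1)).succAbove i') j2|
                  + |A ((0:Fin (k+1)).succAbove i') j1|) :=
                  Finset.sum_le_sum fun i' _ => hstep i'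
              _ = (∑ i' : Fin k, |A ((0:Fin (k+1)).succAbove i') j2|)
                  + ∑ i' : Fin k, |A ((0:Fin (k+1)).succAbove i') j1| :=
                  Finset.sum_add_distrib
              _ ≤ 2 := by
                  have e2 := Fin.sum_univ_succAbove (fun i => |A i j2|) 0
                  have e1 := Fin.sum_univ_succAbove (fun i => |A i j1|) 0
                  have c2 := hcol2 j2
                  have c1 := hcol2 j1
                  omega
          · have : ∀ i, T i j = A i j := fun i => by rw [hTapply, if_neg hj2]
            simp only [this]
            exact hcol j
        -- determinant of T
        have hdetT : ((T.map (fun t : ℤ => (t : ℚ)))).det ≠ 0 := by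
          have hmap : T.map (fun t : ℤ => (t : ℚ)) =
              (A.map (fun t : ℤ => (t : ℚ))).updateCol j2
                (fun i => (A.map (fun t : ℤ => (t : ℚ))) i j2
                  + (-(c:ℚ)) • (A.map (fun t : ℤ => (t : ℚ))) i j1) := by
            ext i jj
            by_cases h : jj = j2
            · rw [h, Matrix.map_apply, hTapply, if_pos rfl, Matrix.updateCol_self]
              simp only [Matrix.map_apply, smul_eq_mul]
              push_cast
              ring
            · rw [Matrix.map_apply, hTapply, if_neg h, Matrix.updateCol_ne h]
              rfl
          rw [hmap, Matrix.det_updateCol_add_smul_self _ (Ne.symm hne12) _]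
          exact hdet
        -- T y = b
        have hxT : ∀ i, ∑ j, (T i j : ℚ) * y j = (b i : ℚ) := by
          intro i
          have hdiff : ∀ j, j ≠ j1 → j ≠ j2 →
              (T i j : ℚ) * y j - (A i j : ℚ) * x j = 0 := by
            intro j hj1 hj2
            rw [hTapply, if_neg hj2, hy, Function.update_of_ne hj1]
            ring
          have hsplit : ∑ j, ((T i j : ℚ) * y j - (A i j : ℚ) * x j)
              = ∑ j ∈ ({j1, j2} : Finset (Fin (k+1))), ((T i j : ℚ) * y j - (A i j : ℚ) * x j) := by
            symm
            refine Finset.sum_subset (Finset.subset_univ _) ?_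
            intro j _ hj
            simp only [Finset.mem_insert, Finset.mem_singleton] at hj
            push_neg at hj
            exact hdiff j hj.1 hj.2
          have hpairval : ∑ j ∈ ({j1, j2} : Finset (Fin (k+1))),
              ((T i j : ℚ) * y j - (A i j : ℚ) * x j) = 0 := by
            rw [Finset.sum_pair hne12]
            have e1 : (T i j1 : ℚ) * y j1 - (A i j1 : ℚ) * x j1
                = (A i j1 : ℚ) * (c:ℚ) * x j2 := by
              rw [hTapply, if_neg hne12, hy, Function.update_self]
              ring
            have e2 : (T i j2 : ℚ) * y j2 - (A i j2 : ℚ) * x j2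
                = -((A i j1 : ℚ) * (c:ℚ) * x j2) := by
              rw [hTapply, if_pos rfl, hy, Function.update_of_ne (Ne.symm hne12)]
              push_cast
              ring
            rw [e1, e2]
            ring
          have : ∑ j, ((T i j : ℚ) * y j - (A i j : ℚ) * x j) = 0 := by
            rw [hsplit, hpairval]
          rw [Finset.sum_sub_distrib] at this
          have := sub_eq_zero.mp this
          rw [this]
          exact hx i
        obtain ⟨H1, _⟩ := rowReduce IH T b y hcolT hxT hdetT 0 j1 haT hTrow
        constructor
        · intro j
          by_cases hj : j = j1
          · rw [hj]
            have hxj1 : x j1 = y j1 - (c:ℚ) * y j2 := by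
              rw [hy, Function.update_self, Function.update_of_ne (Ne.symm hne12)]
              ring
            obtain ⟨z1, hz1⟩ := H1 j1
            obtain ⟨z2, hz2⟩ := H1 j2
            exact ⟨z1 - c * z2, by rw [hxj1, hz1, hz2]; push_cast; ring⟩
          · have : x j = y j := by rw [hy, Function.update_of_ne hj]
            rw [this]
            exact H1 j
        · intro j hle
          have := hcol2 j
          omega

/-- if every column of an integer matrix has entries whose
absolute values sum to at most 2, then the inverse of every non-singular square
submatrix is half-integral. -/
theorem stmt17 {m n k : ℕ} (M : Matrix (Fin m) (Fin n) ℤ)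
    (hcol : ∀ j : Fin n, ∑ i, |M i j| ≤ 2)
    (r : Fin k → Fin m) (c : Fin k → Fin n)
    (hr : Function.Injective r) (hc : Function.Injective c)
    (S : Matrix (Fin k) (Fin k) ℚ)
    (hS : S = (M.submatrix r c).map (fun x => (x : ℚ)))
    (hdet : S.det ≠ 0) :
    ∀ i j : Fin k, ∃ z : ℤ, S⁻¹ i j = (z : ℚ) / 2 := by
  intro i j
  have hSinv : S * S⁻¹ = 1 := Matrix.mul_nonsing_inv S (isUnit_iff_ne_zero.mpr hdet)
  have hcolA : ∀ j' : Fin k, ∑ i', |(M.submatrix r c) i' j'| ≤ 2 := by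
    intro j'
    have h1 : ∑ i' : Fin k, |(M.submatrix r c) i' j'|
        = ∑ i ∈ Finset.univ.image r, |M i (c j')| := by
      rw [Finset.sum_image (fun a _ b _ h => hr h)]
      simp [Matrix.submatrix_apply]
    rw [h1]
    calc ∑ i ∈ Finset.univ.image r, |M i (c j')|
        ≤ ∑ i, |M i (c j')| :=
          Finset.sum_le_sum_of_subset_of_nonneg (Finset.subset_univ _)
            (fun _ _ _ => abs_nonneg _)
      _ ≤ 2 := hcol _
  have hxeq : ∀ i' : Fin k, ∑ t, ((M.submatrix r c) i' t : ℚ) * S⁻¹ t j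
      = (((if i' = j then 1 else 0 : ℤ)) : ℚ) := by
    intro i'
    have h1 : ∀ t, ((M.submatrix r c) i' t : ℚ) = S i' t := by
      intro t; rw [hS]; rfl
    calc ∑ t, ((M.submatrix r c) i' t : ℚ) * S⁻¹ t j
        = ∑ t, S i' t * S⁻¹ t j :=
          Finset.sum_congr rfl fun t _ => by rw [h1]
      _ = (S * S⁻¹) i' j := (Matrix.mul_apply).symm
      _ = (1 : Matrix (Fin k) (Fin k) ℚ) i' j := by rw [hSinv]
      _ = _ := by
          rw [Matrix.one_apply]
          by_cases h : i' = j <;> simp [h]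
  have hdetA : ((M.submatrix r c).map (fun t : ℤ => (t : ℚ))).det ≠ 0 := by
    rw [← hS]; exact hdet
  obtain ⟨H1, _⟩ := key k (M.submatrix r c) (fun t => if t = j then 1 else 0)
    (fun t => S⁻¹ t j) hcolA hxeq hdetA
  exact H1 i
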